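/- Let f : ℝ³ → ℂ be measurable and ℤ³-periodic with finite L² norm on [0,1)³, let K : ℝ³ × ℝ³ → ℂ be measurable and ℤ³-periodic in its second argument, and suppose M : ℝ³ → [0,∞) satisfies |K(ζ,v)| ≤ M(ζ) for all ζ, v and ∫_{ℝ³} (1 + |ζ|)·M(ζ) dζ < ∞. Then for all η ∈ (0,1] and all t ≥ 0, |∫_{ℝ³} ∫_{[0,1)³} K(ζ,v) · (exp(−i t (e(v + ηζ/2) − e(v − ηζ/2))) − 1) · conj(f(v − ηζ/2)) · f(v + ηζ/2) dv dζ| ≤ 2π√3 · η · t · (∫_{ℝ³} |ζ|·M(ζ) dζ) · ‖f‖²_{L²([0,1)³)}. -/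

import Mathlib

open MeasureTheory Real

/-- The lattice dispersion relation `e(k) = 3 - cos(2πk₁) - cos(2πk₂) - cos(2πk₃)`. -/
noncomputable def disp (k : Fin 3 → ℝ) : ℝ := 3 - ∑ i, Real.cos (2 * Real.pi * k i)

/-- The fundamental domain `[0,1)³` of the torus. -/
def box3 : Set (Fin 3 → ℝ) := Set.univ.pi fun _ => Set.Ico (0 : ℝ) 1

/-- The Euclidean norm on `ℝ³` (realized as `Fin 3 → ℝ`). -/
noncomputable def eunorm3 (x : Fin 3 → ℝ) : ℝ := Real.sqrt (∑ i, x i ^ 2)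

lemma eunorm3_nonneg (x : Fin 3 → ℝ) : 0 ≤ eunorm3 x := Real.sqrt_nonneg _

lemma eunorm3_smul (c : ℝ) (hc : 0 ≤ c) (x : Fin 3 → ℝ) :
    eunorm3 (c • x) = c * eunorm3 x := by
  unfold eunorm3
  have : ∑ i, (c • x) i ^ 2 = c ^ 2 * ∑ i, x i ^ 2 := by
    simp [Finset.mul_sum, mul_pow]
  rw [this, Real.sqrt_mul (by positivity), Real.sqrt_sq hc]

lemma sum_abs_le_sqrt3 (x : Fin 3 → ℝ) : ∑ i, |x i| ≤ Real.sqrt 3 * eunorm3 x := by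
  have h1 : (∑ i, |x i|) ^ 2 ≤ 3 * ∑ i, x i ^ 2 := by
    have := sq_sum_le_card_mul_sum_sq (s := (Finset.univ : Finset (Fin 3)))
      (f := fun i => |x i|)
    simpa [sq_abs] using this
  have h2 : ∑ i, |x i| = Real.sqrt ((∑ i, |x i|) ^ 2) :=
    (Real.sqrt_sq (by positivity)).symm
  rw [h2]
  unfold eunorm3
  rw [← Real.sqrt_mul (by norm_num : (0:ℝ) ≤ 3)]
  exact Real.sqrt_le_sqrt h1

lemma abs_cos_sub_cos_le (x y : ℝ) : |Real.cos x - Real.cos y| ≤ |x - y| := by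
  rw [Real.cos_sub_cos]
  have h1 : |Real.sin ((x + y) / 2)| ≤ 1 := Real.abs_sin_le_one _
  have h2 : |Real.sin ((x - y) / 2)| ≤ |(x - y) / 2| := Real.abs_sin_le_abs
  have h3 : |(x - y) / 2| = |x - y| / 2 := by rw [abs_div]; norm_num
  rw [abs_mul, abs_mul]
  have : |(-2 : ℝ)| = 2 := by norm_num
  rw [this]
  nlinarith [abs_nonneg (Real.sin ((x - y) / 2)), abs_nonneg (x - y)]

lemma abs_exp_I_sub_one_le (θ : ℝ) :
    ‖Complex.exp ((θ : ℂ) * Complex.I) - 1‖ ≤ |θ| := by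
  rw [Complex.exp_mul_I]
  have he : Complex.cos θ + Complex.sin θ * Complex.I - 1
      = ((Real.cos θ - 1 : ℝ) : ℂ) + ((Real.sin θ : ℝ) : ℂ) * Complex.I := by
    rw [← Complex.ofReal_cos, ← Complex.ofReal_sin]; push_cast; ring
  rw [he, Complex.norm_def, Complex.normSq_add_mul_I]
  have h1 : (Real.cos θ - 1) ^ 2 + Real.sin θ ^ 2 ≤ θ ^ 2 := by
    have hc := Real.one_sub_sq_div_two_le_cos (x := θ)
    nlinarith [Real.sin_sq_add_cos_sq θ, Real.cos_le_one θ]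
  calc Real.sqrt ((Real.cos θ - 1) ^ 2 + Real.sin θ ^ 2) ≤ Real.sqrt (θ ^ 2) :=
        Real.sqrt_le_sqrt h1
    _ = |θ| := Real.sqrt_sq_eq_abs θ

lemma disp_diff_le (v c : Fin 3 → ℝ) :
    |disp (v + c) - disp (v - c)| ≤ 4 * Real.pi * Real.sqrt 3 * eunorm3 c := by
  unfold disp
  have h : (3 - ∑ i, Real.cos (2 * Real.pi * (v + c) i))
      - (3 - ∑ i, Real.cos (2 * Real.pi * (v - c) i))
      = ∑ i, (Real.cos (2 * Real.pi * (v i - c i)) - Real.cos (2 * Real.pi * (v i + c i))) := by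
    simp only [Pi.add_apply, Pi.sub_apply, Finset.sum_sub_distrib]
    ring
  rw [h]
  calc |∑ i, (Real.cos (2 * Real.pi * (v i - c i)) - Real.cos (2 * Real.pi * (v i + c i)))|
      ≤ ∑ i, |Real.cos (2 * Real.pi * (v i - c i)) - Real.cos (2 * Real.pi * (v i + c i))| :=
        Finset.abs_sum_le_sum_abs _ _
    _ ≤ ∑ i, 4 * Real.pi * |c i| := by
        refine Finset.sum_le_sum fun i _ => ?_
        calc |Real.cos (2 * Real.pi * (v i - c i)) - Real.cos (2 * Real.pi * (v i + c i))|
            ≤ |2 * Real.pi * (v i - c i) - 2 * Real.pi * (v i + c i)| := _root_.abs_cos_sub_cos_le _ _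
          _ = 4 * Real.pi * |c i| := by
              have : 2 * Real.pi * (v i - c i) - 2 * Real.pi * (v i + c i)
                  = -(4 * Real.pi * c i) := by ring
              rw [this, abs_neg, abs_mul, abs_of_nonneg (by positivity : (0:ℝ) ≤ 4 * Real.pi)]
    _ = 4 * Real.pi * ∑ i, |c i| := by rw [Finset.mul_sum]
    _ ≤ 4 * Real.pi * (Real.sqrt 3 * eunorm3 c) := by
        have := sum_abs_le_sqrt3 c
        nlinarith [Real.pi_pos]
    _ = 4 * Real.pi * Real.sqrt 3 * eunorm3 c := by ring

lemma box3_eq : box3 = ZSpan.fundamentalDomain (Pi.basisFun ℝ (Fin 3)) := by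
  ext x
  simp [box3, ZSpan.fundamentalDomain, Set.mem_pi]

lemma periodic_translate (g : (Fin 3 → ℝ) → ℝ)
    (hper : ∀ (v : Fin 3 → ℝ) (m : Fin 3 → ℤ), g (v + fun i => (m i : ℝ)) = g v)
    (hint : IntegrableOn g box3 volume) (a : Fin 3 → ℝ) :
    IntegrableOn (fun v => g (v + a)) box3 volume ∧
      (∫ v in box3, g (v + a)) = ∫ v in box3, g v := by
  set L := (Submodule.span ℤ (Set.range (Pi.basisFun ℝ (Fin 3)))).toAddSubgroup with hL
  have hinv : ∀ (ℓ : L) (x : Fin 3 → ℝ), g (ℓ +ᵥ x) = g x := by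
    intro ℓ x
    have hmem : (ℓ : Fin 3 → ℝ) ∈ Submodule.span ℤ (Set.range (Pi.basisFun ℝ (Fin 3))) := ℓ.2
    have hm := ((Pi.basisFun ℝ (Fin 3)).mem_span_iff_repr_mem ℤ (ℓ : Fin 3 → ℝ)).mp hmem
    choose m hmm using hm
    have hcoe : (ℓ : Fin 3 → ℝ) = fun i => (m i : ℝ) := by
      funext i
      have := hmm i
      simpa using this.symm
    show g ((ℓ : Fin 3 → ℝ) + x) = g x
    rw [hcoe, add_comm]
    exact hper x m
  have hFD : IsAddFundamentalDomain L box3 volume := by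
    rw [box3_eq]; exact ZSpan.isAddFundamentalDomain' _ _
  have hsymm : MeasurePreserving (⇑(Equiv.addRight a).symm)
      (volume : Measure (Fin 3 → ℝ)) volume := by
    rw [Equiv.addRight_symm, Equiv.coe_addRight]
    exact measurePreserving_add_right volume (-a)
  have hFD2 : IsAddFundamentalDomain L ((fun v => v + a) '' box3) volume := by
    have h := hFD.image_of_equiv (Equiv.addRight a) hsymm.quasiMeasurePreserving
      (Equiv.refl _) ?_
    · rwa [Equiv.coe_addRight] at h
    · intro ℓ x
      show (ℓ +ᵥ x) + a = ℓ +ᵥ (x + a)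
      show ((ℓ : Fin 3 → ℝ) + x) + a = (ℓ : Fin 3 → ℝ) + (x + a)
      rw [add_assoc]
  have hpre : (fun v => v + a) ⁻¹' ((fun v => v + a) '' box3) = box3 := by
    ext v
    constructor
    · rintro ⟨x, hx, hxa⟩
      have : x = v := add_right_cancel hxa
      rwa [← this]
    · intro hv; exact ⟨v, hv, rfl⟩
  have hmp : MeasurePreserving (fun v : Fin 3 → ℝ => v + a) volume volume :=
    measurePreserving_add_right volume a
  have hemb : MeasurableEmbedding (fun v : Fin 3 → ℝ => v + a) :=
    (MeasurableEquiv.addRight a).measurableEmbedding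
  haveI : Countable ↥L :=
    inferInstanceAs (Countable (Submodule.span ℤ (Set.range (Pi.basisFun ℝ (Fin 3)))))
  constructor
  · have h1 : IntegrableOn g ((fun v => v + a) '' box3) volume :=
      (hFD.integrableOn_iff hFD2 hinv).mp hint
    have h2 := (hmp.integrableOn_comp_preimage hemb (f := g)
      (s := (fun v => v + a) '' box3)).mpr h1
    rwa [hpre] at h2
  · have h1 := hmp.setIntegral_preimage_emb hemb g ((fun v => v + a) '' box3)
    rw [hpre] at h1
    rw [h1]
    exact hFD2.setIntegral_eq hFD hinv

theorem free_evolution_wigner_continuity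
    (f : (Fin 3 → ℝ) → ℂ) (K : (Fin 3 → ℝ) → (Fin 3 → ℝ) → ℂ) (M : (Fin 3 → ℝ) → ℝ)
    (hfmeas : Measurable f)
    (hfper : ∀ (v : Fin 3 → ℝ) (m : Fin 3 → ℤ), f (v + fun i => (m i : ℝ)) = f v)
    (hf2 : IntegrableOn (fun v => ‖f v‖ ^ 2) box3 volume)
    (hKmeas : Measurable (Function.uncurry K))
    (hKper : ∀ (ζ v : Fin 3 → ℝ) (m : Fin 3 → ℤ), K ζ (v + fun i => (m i : ℝ)) = K ζ v)
    (hM0 : ∀ ζ, 0 ≤ M ζ) (hMmeas : Measurable M)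
    (hMint : Integrable (fun ζ => (1 + eunorm3 ζ) * M ζ) volume)
    (hKM : ∀ ζ v, ‖K ζ v‖ ≤ M ζ) :
    ∀ η : ℝ, η ∈ Set.Ioc (0 : ℝ) 1 → ∀ t : ℝ, 0 ≤ t →
      ‖∫ ζ : Fin 3 → ℝ, ∫ v in box3,
          K ζ v *
            (Complex.exp (-Complex.I * (t : ℂ) *
                ((disp (v + (η / 2) • ζ) - disp (v - (η / 2) • ζ) : ℝ) : ℂ)) - 1) *
            (starRingEnd ℂ) (f (v - (η / 2) • ζ)) * f (v + (η / 2) • ζ)‖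
        ≤ 2 * Real.pi * Real.sqrt 3 * η * t * (∫ ζ : Fin 3 → ℝ, eunorm3 ζ * M ζ) *
            (∫ v in box3, ‖f v‖ ^ 2) := by
  intro η hη t ht
  obtain ⟨hη0, _⟩ := hη
  set F : ℝ := ∫ v in box3, ‖f v‖ ^ 2 with hFdef
  have hF0 : 0 ≤ F :=
    setIntegral_nonneg (by rw [box3_eq]; exact ZSpan.fundamentalDomain_measurableSet _)
      fun v _ => by positivity
  have htrans : ∀ a : Fin 3 → ℝ,
      IntegrableOn (fun v => ‖f (v + a)‖ ^ 2) box3 volume ∧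
        (∫ v in box3, ‖f (v + a)‖ ^ 2) = F := by
    intro a
    refine periodic_translate (fun v => ‖f v‖ ^ 2) (fun v m => ?_) hf2 a
    show ‖f (v + fun i => ((m i : ℝ)))‖ ^ 2 = ‖f v‖ ^ 2
    rw [hfper]
  have hinner : ∀ ζ : Fin 3 → ℝ,
      ‖∫ v in box3, K ζ v *
            (Complex.exp (-Complex.I * (t : ℂ) *
                ((disp (v + (η / 2) • ζ) - disp (v - (η / 2) • ζ) : ℝ) : ℂ)) - 1) *
            (starRingEnd ℂ) (f (v - (η / 2) • ζ)) * f (v + (η / 2) • ζ)‖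
        ≤ 2 * Real.pi * Real.sqrt 3 * η * t * F * (eunorm3 ζ * M ζ) := by
    intro ζ
    set c : Fin 3 → ℝ := (η / 2) • ζ with hcdef
    set D : ℝ := 2 * Real.pi * Real.sqrt 3 * η * eunorm3 ζ with hDdef
    have hD0 : 0 ≤ D := by
      have h1 := eunorm3_nonneg ζ
      have h2 := Real.sqrt_nonneg (3:ℝ)
      have h3 := Real.pi_pos
      rw [hDdef]; positivity
    have hExp : ∀ v : Fin 3 → ℝ,
        ‖Complex.exp (-Complex.I * (t : ℂ) *
          ((disp (v + c) - disp (v - c) : ℝ) : ℂ)) - 1‖ ≤ t * D := by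
      intro v
      set Δ : ℝ := disp (v + c) - disp (v - c) with hΔ
      have harg : -Complex.I * (t : ℂ) * ((Δ : ℝ) : ℂ) = ((-(t * Δ) : ℝ) : ℂ) * Complex.I := by
        push_cast; ring
      rw [harg]
      calc ‖Complex.exp (((-(t * Δ) : ℝ) : ℂ) * Complex.I) - 1‖
          ≤ |(-(t * Δ) : ℝ)| := abs_exp_I_sub_one_le _
        _ = t * |Δ| := by rw [abs_neg, abs_mul, abs_of_nonneg ht]
        _ ≤ t * D := by
            have hΔle : |Δ| ≤ D := by
              have h1 := disp_diff_le v c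
              have h2 : eunorm3 c = (η / 2) * eunorm3 ζ :=
                eunorm3_smul _ (by linarith) ζ
              rw [h2] at h1
              calc |Δ| ≤ 4 * Real.pi * Real.sqrt 3 * ((η / 2) * eunorm3 ζ) := h1
                _ = D := by rw [hDdef]; ring
            exact mul_le_mul_of_nonneg_left hΔle ht
    have htD0 : 0 ≤ t * D := mul_nonneg ht hD0
    have hpt : ∀ v : Fin 3 → ℝ,
        ‖K ζ v *
            (Complex.exp (-Complex.I * (t : ℂ) *
                ((disp (v + c) - disp (v - c) : ℝ) : ℂ)) - 1) *
            (starRingEnd ℂ) (f (v - c)) * f (v + c)‖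
          ≤ M ζ * (t * D) * ((‖f (v + -c)‖ ^ 2 + ‖f (v + c)‖ ^ 2) / 2) := by
      intro v
      have hsub : v - c = v + -c := by rw [sub_eq_add_neg]
      have ha10 : (0:ℝ) ≤ ‖f (v + -c)‖ := norm_nonneg _
      have hb10 : (0:ℝ) ≤ ‖f (v + c)‖ := norm_nonneg _
      have hKb := hKM ζ v
      have hEb := hExp v
      have hE0 : 0 ≤ ‖Complex.exp (-Complex.I * (t : ℂ) *
          ((disp (v + c) - disp (v - c) : ℝ) : ℂ)) - 1‖ := norm_nonneg _
      have hnorm : ‖K ζ v *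
            (Complex.exp (-Complex.I * (t : ℂ) *
                ((disp (v + c) - disp (v - c) : ℝ) : ℂ)) - 1) *
            (starRingEnd ℂ) (f (v - c)) * f (v + c)‖
          = ‖K ζ v‖ *
            ‖Complex.exp (-Complex.I * (t : ℂ) *
                ((disp (v + c) - disp (v - c) : ℝ) : ℂ)) - 1‖ *
            (‖f (v + -c)‖ * ‖f (v + c)‖) := by
        simp only [norm_mul, Complex.norm_conj]
        rw [hsub]
        ring
      rw [hnorm]
      have hab : ‖f (v + -c)‖ * ‖f (v + c)‖
          ≤ (‖f (v + -c)‖ ^ 2 + ‖f (v + c)‖ ^ 2) / 2 := by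
        nlinarith [sq_nonneg (‖f (v + -c)‖ - ‖f (v + c)‖)]
      have h1 : ‖K ζ v‖ *
          ‖Complex.exp (-Complex.I * (t : ℂ) *
              ((disp (v + c) - disp (v - c) : ℝ) : ℂ)) - 1‖ ≤ M ζ * (t * D) :=
        mul_le_mul hKb hEb hE0 (hM0 ζ)
      exact mul_le_mul h1 hab (by positivity)
        (mul_nonneg (hM0 ζ) htD0)
    have hbint : IntegrableOn
        (fun v => M ζ * (t * D) * ((‖f (v + -c)‖ ^ 2 + ‖f (v + c)‖ ^ 2) / 2)) box3 volume :=
      (((htrans (-c)).1.add (htrans c).1).div_const 2).const_mul (M ζ * (t * D))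
    have hbval : (∫ v in box3, M ζ * (t * D) * ((‖f (v + -c)‖ ^ 2 + ‖f (v + c)‖ ^ 2) / 2))
        = M ζ * (t * D) * F := by
      rw [integral_const_mul]
      congr 1
      rw [integral_div, integral_add (htrans (-c)).1 (htrans c).1,
        (htrans (-c)).2, (htrans c).2]
      ring
    calc ‖∫ v in box3, K ζ v *
            (Complex.exp (-Complex.I * (t : ℂ) *
                ((disp (v + c) - disp (v - c) : ℝ) : ℂ)) - 1) *
            (starRingEnd ℂ) (f (v - c)) * f (v + c)‖
        ≤ ∫ v in box3, ‖K ζ v *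
            (Complex.exp (-Complex.I * (t : ℂ) *
                ((disp (v + c) - disp (v - c) : ℝ) : ℂ)) - 1) *
            (starRingEnd ℂ) (f (v - c)) * f (v + c)‖ := norm_integral_le_integral_norm _
      _ ≤ ∫ v in box3, M ζ * (t * D) * ((‖f (v + -c)‖ ^ 2 + ‖f (v + c)‖ ^ 2) / 2) :=
          integral_mono_of_nonneg (Filter.Eventually.of_forall fun v => norm_nonneg _) hbint
            (Filter.Eventually.of_forall fun v => hpt v)
      _ = M ζ * (t * D) * F := hbval
      _ = 2 * Real.pi * Real.sqrt 3 * η * t * F * (eunorm3 ζ * M ζ) := by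
          rw [hDdef]; ring
  have heucont : Continuous eunorm3 := by
    unfold eunorm3
    exact Real.continuous_sqrt.comp (by continuity)
  have hprod_int : Integrable (fun ζ => eunorm3 ζ * M ζ) volume := by
    refine hMint.mono ((heucont.measurable.mul hMmeas).aestronglyMeasurable)
      (Filter.Eventually.of_forall fun ζ => ?_)
    have h1 : 0 ≤ eunorm3 ζ := eunorm3_nonneg ζ
    have h2 : 0 ≤ M ζ := hM0 ζ
    rw [Real.norm_eq_abs, Real.norm_eq_abs, abs_of_nonneg (by positivity),
      abs_of_nonneg (by positivity)]
    nlinarith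
  have houter : Integrable
      (fun ζ => 2 * Real.pi * Real.sqrt 3 * η * t * F * (eunorm3 ζ * M ζ)) volume :=
    hprod_int.const_mul _
  calc ‖∫ ζ : Fin 3 → ℝ, ∫ v in box3,
          K ζ v *
            (Complex.exp (-Complex.I * (t : ℂ) *
                ((disp (v + (η / 2) • ζ) - disp (v - (η / 2) • ζ) : ℝ) : ℂ)) - 1) *
            (starRingEnd ℂ) (f (v - (η / 2) • ζ)) * f (v + (η / 2) • ζ)‖
      = ‖∫ ζ : Fin 3 → ℝ, ∫ v in box3,
          K ζ v *
            (Complex.exp (-Complex.I * (t : ℂ) *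
                ((disp (v + (η / 2) • ζ) - disp (v - (η / 2) • ζ) : ℝ) : ℂ)) - 1) *
            (starRingEnd ℂ) (f (v - (η / 2) • ζ)) * f (v + (η / 2) • ζ)‖ :=
        rfl
    _ ≤ ∫ ζ : Fin 3 → ℝ, ‖∫ v in box3,
          K ζ v *
            (Complex.exp (-Complex.I * (t : ℂ) *
                ((disp (v + (η / 2) • ζ) - disp (v - (η / 2) • ζ) : ℝ) : ℂ)) - 1) *
            (starRingEnd ℂ) (f (v - (η / 2) • ζ)) * f (v + (η / 2) • ζ)‖ :=
        norm_integral_le_integral_norm _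
    _ ≤ ∫ ζ : Fin 3 → ℝ, 2 * Real.pi * Real.sqrt 3 * η * t * F * (eunorm3 ζ * M ζ) :=
        integral_mono_of_nonneg (Filter.Eventually.of_forall fun ζ => norm_nonneg _) houter
          (Filter.Eventually.of_forall fun ζ => hinner ζ)
    _ = 2 * Real.pi * Real.sqrt 3 * η * t * F * ∫ ζ : Fin 3 → ℝ, eunorm3 ζ * M ζ :=
        integral_const_mul _ _
    _ = 2 * Real.pi * Real.sqrt 3 * η * t * (∫ ζ : Fin 3 → ℝ, eunorm3 ζ * M ζ) * F := by
        ring
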